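/- arXiv:2605.14168 — 2 statements merged into one kernel-verified Lean document; each statement's English description precedes it below -/
import Mathlib

section
/- Let c be a finite set with a distinguished element i ∈ c, let d ≥ 1, and for each j ∈ c let q_j be the uniform distribution on a nondegenerate interval I_j, with q = ⊗_{j∈c} q_j the product measure on ℝ^c. For a multi-index k = (k_j)_{j∈c} ∈ {1, …, d}^c define h_k(x) = k_i · x_i^{k_i−1} · ∏_{j∈c∖{i}} (x_j^{k_j} − E_{q_j}[x_j^{k_j}]). Define d × d matrices: A^i_{m,n} = m·n·E_{q_i}[X^{m+n−2}] and, for j ∈ c∖{i}, A^j_{m,n} = E_{q_j}[(X^m − E[X^m])(X^n − E[X^n])], m, n ∈ {1, …, d}. Then for any nonempty subset K ⊆ {1, …, d}^c, the Gram matrix M indexed by K with M_{k,k'} = E_q[h_k · h_{k'}] satisfies λ_min(M) ≥ ∏_{j∈c} λ_min(A^j) > 0. -/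
open MeasureTheory

/-- The uniform probability measure on the interval `[a, b]`. -/
noncomputable def unif (a b : ℝ) : Measure ℝ :=
  (volume (Set.Icc a b))⁻¹ • volume.restrict (Set.Icc a b)

/-- The mostly centered basis function `h_k(x) = k_i·x_i^{k_i-1}·∏_{j≠i}(x_j^{k_j} − E[x_j^{k_j}])`,
where the `j`-th coordinate is centered with respect to the uniform distribution on
`[a_j, b_j]`. -/
noncomputable def hfun {ι : Type*} [Fintype ι] [DecidableEq ι] (i : ι) (a b : ι → ℝ)
    (k : ι → ℕ) (x : ι → ℝ) : ℝ :=
  (k i : ℝ) * x i ^ (k i - 1) *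
    ∏ j ∈ Finset.univ.erase i, (x j ^ k j - ∫ y, y ^ k j ∂(unif (a j) (b j)))

lemma unif_isProb {a b : ℝ} (h : a < b) : IsProbabilityMeasure (unif a b) := by
  constructor
  have h0 : volume (Set.Icc a b) ≠ 0 := by
    simp [Real.volume_Icc, ENNReal.ofReal_pos, sub_pos, h]
  have ht : volume (Set.Icc a b) ≠ ⊤ := by simp [Real.volume_Icc]
  simp only [unif, Measure.smul_apply, Measure.restrict_apply MeasurableSet.univ,
    Set.univ_inter, smul_eq_mul]
  exact ENNReal.inv_mul_cancel h0 ht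

lemma integrable_unif {a b : ℝ} (h : a < b) (f : ℝ → ℝ) (hf : Continuous f) :
    Integrable f (unif a b) := by
  refine Integrable.smul_measure ?_ ?_
  · exact hf.integrableOn_Icc
  · refine ENNReal.inv_ne_top.mpr ?_
    simp [Real.volume_Icc, ENNReal.ofReal_pos, sub_pos, h]

lemma unif_null {a b : ℝ} {s : Set ℝ} (hs : volume s = 0) : unif a b s = 0 := by
  have h1 : volume.restrict (Set.Icc a b) s = 0 :=
    le_antisymm (le_trans (Measure.restrict_apply_le _ _) hs.le) (zero_le)
  simp [unif, Measure.smul_apply, h1]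

lemma integral_sq_poly_pos {a b : ℝ} (h : a < b) (p : Polynomial ℝ) (hp : p ≠ 0) :
    0 < ∫ x, (p.eval x) ^ 2 ∂(unif a b) := by
  haveI := unif_isProb h
  rw [integral_pos_iff_support_of_nonneg (fun x => sq_nonneg _)
    (integrable_unif h _ (p.continuous.pow 2))]
  have hsupp : Function.support (fun x => (p.eval x) ^ 2) = {x | p.IsRoot x}ᶜ := by
    ext x; simp [Function.support, Polynomial.IsRoot, pow_eq_zero_iff]
  have hfin : {x | p.IsRoot x}.Finite := p.finite_setOf_isRoot hp
  have hz : unif a b {x | p.IsRoot x} = 0 := unif_null (hfin.measure_zero _)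
  rw [hsupp, measure_compl hfin.measurableSet (by simp [hz]), hz]
  simp

lemma dotProduct_gram {d : ℕ} (q : Measure ℝ) (g : Fin d → ℝ → ℝ)
    (hint : ∀ m n : Fin d, Integrable (fun t => g m t * g n t) q)
    (A : Matrix (Fin d) (Fin d) ℝ) (hA : ∀ m n, A m n = ∫ t, g m t * g n t ∂q)
    (x : Fin d → ℝ) :
    dotProduct x (A.mulVec x) = ∫ t, (∑ m, x m * g m t) ^ 2 ∂q := by
  have key : ∀ t, (∑ m, x m * g m t) ^ 2 = ∑ m, ∑ n, (x m * x n) * (g m t * g n t) := by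
    intro t
    rw [sq, Finset.sum_mul_sum]
    exact Finset.sum_congr rfl fun m _ => Finset.sum_congr rfl fun n _ => by ring
  simp_rw [key]
  rw [integral_finset_sum _ (fun m _ => integrable_finset_sum _
    (fun n _ => (hint m n).const_mul _))]
  rw [Finset.sum_congr rfl fun m _ => integral_finset_sum _
    (fun n _ => (hint m n).const_mul _)]
  simp only [dotProduct, Matrix.mulVec, hA, Finset.mul_sum]
  refine Finset.sum_congr rfl fun m _ => Finset.sum_congr rfl fun n _ => ?_
  rw [MeasureTheory.integral_const_mul]
  ring

lemma hankel_posDef {d : ℕ} {a b : ℝ} (h : a < b) (A : Matrix (Fin d) (Fin d) ℝ)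
    (hA : ∀ m n : Fin d, A m n =
      ((m : ℕ) + 1) * ((n : ℕ) + 1) * ∫ x, x ^ ((m : ℕ) + (n : ℕ)) ∂(unif a b)) :
    A.PosDef := by
  set g : Fin d → ℝ → ℝ := fun m t => ((m : ℕ) + 1) * t ^ (m : ℕ) with hg
  have hint : ∀ m n : Fin d, Integrable (fun t => g m t * g n t) (unif a b) :=
    fun m n => integrable_unif h _ (by fun_prop)
  have hA' : ∀ m n, A m n = ∫ t, g m t * g n t ∂(unif a b) := by
    intro m n
    rw [hA]
    rw [show (fun t => g m t * g n t)
      = fun t => (((m : ℕ) + 1) * ((n : ℕ) + 1) : ℝ) * t ^ ((m : ℕ) + (n : ℕ)) from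
      funext fun t => by simp [hg, pow_add]; ring]
    rw [MeasureTheory.integral_const_mul]
  have herm : A.IsHermitian := by
    refine Matrix.IsHermitian.ext fun m n => ?_
    rw [star_trivial, hA', hA']
    simp_rw [mul_comm (g n _) (g m _)]
  refine Matrix.PosDef.of_dotProduct_mulVec_pos herm fun x hx => ?_
  rw [star_trivial]
  rw [dotProduct_gram (unif a b) g hint A hA' x]
  set p : Polynomial ℝ :=
    ∑ m : Fin d, Polynomial.C (x m * ((m : ℕ) + 1)) * Polynomial.X ^ (m : ℕ) with hp
  have heval : ∀ t, (∑ m, x m * g m t) = p.eval t := by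
    intro t
    rw [hp, Polynomial.eval_finset_sum]
    exact Finset.sum_congr rfl fun m _ => by simp [hg]; ring
  have hpne : p ≠ 0 := by
    obtain ⟨m0, hm0⟩ := Function.ne_iff.mp hx
    intro hcontra
    apply hm0
    have hc := congrArg (fun q => Polynomial.coeff q (m0 : ℕ)) hcontra
    simp only [hp, Polynomial.finset_sum_coeff, Polynomial.coeff_C_mul,
      Polynomial.coeff_X_pow, Polynomial.coeff_zero, mul_ite, mul_one, mul_zero] at hc
    rw [Finset.sum_eq_single m0
      (fun n _ hne => if_neg fun hh => hne (Fin.val_injective hh).symm)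
      (by simp)] at hc
    simp only [if_pos rfl] at hc
    have : ((m0 : ℕ) : ℝ) + 1 ≠ 0 := by positivity
    exact (mul_eq_zero.mp hc).resolve_right this
  simp_rw [heval]
  exact integral_sq_poly_pos h p hpne

lemma cov_posDef {d : ℕ} {a b : ℝ} (h : a < b) (A : Matrix (Fin d) (Fin d) ℝ)
    (hA : ∀ m n : Fin d, A m n =
      ∫ x, (x ^ ((m : ℕ) + 1) - ∫ y, y ^ ((m : ℕ) + 1) ∂(unif a b)) *
           (x ^ ((n : ℕ) + 1) - ∫ y, y ^ ((n : ℕ) + 1) ∂(unif a b)) ∂(unif a b)) :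
    A.PosDef := by
  set μ : ℕ → ℝ := fun e => ∫ y, y ^ e ∂(unif a b) with hμ
  set g : Fin d → ℝ → ℝ := fun m t => t ^ ((m : ℕ) + 1) - μ ((m : ℕ) + 1) with hg
  have hint : ∀ m n : Fin d, Integrable (fun t => g m t * g n t) (unif a b) :=
    fun m n => integrable_unif h _ (by fun_prop)
  have hA' : ∀ m n, A m n = ∫ t, g m t * g n t ∂(unif a b) := fun m n => hA m n
  have herm : A.IsHermitian := by
    refine Matrix.IsHermitian.ext fun m n => ?_
    rw [star_trivial, hA', hA']
    simp_rw [mul_comm (g n _) (g m _)]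
  refine Matrix.PosDef.of_dotProduct_mulVec_pos herm fun x hx => ?_
  rw [star_trivial]
  rw [dotProduct_gram (unif a b) g hint A hA' x]
  set p : Polynomial ℝ :=
    ∑ m : Fin d, Polynomial.C (x m) *
      (Polynomial.X ^ ((m : ℕ) + 1) - Polynomial.C (μ ((m : ℕ) + 1))) with hp
  have heval : ∀ t, (∑ m, x m * g m t) = p.eval t := by
    intro t
    rw [hp, Polynomial.eval_finset_sum]
    exact Finset.sum_congr rfl fun m _ => by simp [hg]
  have hpne : p ≠ 0 := by
    obtain ⟨m0, hm0⟩ := Function.ne_iff.mp hx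
    intro hcontra
    apply hm0
    have hc := congrArg (fun q => Polynomial.coeff q ((m0 : ℕ) + 1)) hcontra
    simp only [hp, Polynomial.finset_sum_coeff, Polynomial.coeff_C_mul,
      Polynomial.coeff_sub, Polynomial.coeff_X_pow, Polynomial.coeff_C,
      Polynomial.coeff_zero, Nat.add_eq_zero, one_ne_zero, and_false, if_false, sub_zero,
      mul_ite, mul_one, mul_zero] at hc
    rw [Finset.sum_eq_single m0
      (fun n _ hne => if_neg fun hh => hne
        (Fin.val_injective (Nat.add_right_cancel hh)).symm)
      (by simp)] at hc
    simpa using hc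
  simp_rw [heval]
  exact integral_sq_poly_pos h p hpne


open scoped MatrixOrder Matrix in
theorem Matrix.posSemidef_iff_eq_transpose_mul_self {n : Type*} [Fintype n] [DecidableEq n]
    {A : Matrix n n ℝ} : A.PosSemidef ↔ ∃ B : Matrix n n ℝ, A = Bᴴ * B := by
  constructor
  · intro hA
    obtain ⟨B, hB⟩ := CStarAlgebra.nonneg_iff_eq_star_mul_self.mp hA.nonneg
    exact ⟨B, hB⟩
  · rintro ⟨B, rfl⟩
    exact Matrix.posSemidef_conjTranspose_mul_self B

lemma prodMatrix_posSemidef {ι : Type*} [Fintype ι] [DecidableEq ι] {d : ℕ}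
    (F : ι → Matrix (Fin d) (Fin d) ℝ) (hF : ∀ j, (F j).PosSemidef) :
    (Matrix.of fun u v : ι → Fin d => ∏ j, F j (u j) (v j)).PosSemidef := by
  choose G hG using fun j => Matrix.posSemidef_iff_eq_transpose_mul_self.mp (hF j)
  rw [Matrix.posSemidef_iff_eq_transpose_mul_self]
  refine ⟨Matrix.of fun w u : ι → Fin d => ∏ j, G j (w j) (u j), ?_⟩
  ext u v
  simp only [Matrix.of_apply, Matrix.mul_apply, Matrix.conjTranspose_apply, star_trivial]
  have : ∀ j, F j (u j) (v j) = ∑ m, G j m (u j) * G j m (v j) := by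
    intro j
    rw [hG j]
    simp [Matrix.mul_apply, Matrix.conjTranspose_apply]
  simp_rw [this]
  rw [Fintype.prod_sum (fun j m => G j m (u j) * G j m (v j))]
  exact Finset.sum_congr rfl fun w _ => by rw [← Finset.prod_mul_distrib]

lemma posSemidef_smul_nonneg {n : Type*} [Fintype n] {M : Matrix n n ℝ}
    (hM : M.PosSemidef) {c : ℝ} (hc : 0 ≤ c) : (c • M).PosSemidef := by
  refine Matrix.PosSemidef.of_dotProduct_mulVec_nonneg ?_ fun x => ?_
  · unfold Matrix.IsHermitian
    rw [Matrix.conjTranspose_smul, star_trivial, hM.1.eq]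
  · rw [Matrix.smul_mulVec, dotProduct_smul, smul_eq_mul]
    exact mul_nonneg hc (hM.dotProduct_mulVec_nonneg x)

lemma prodMatrix_sub_smul_one_posSemidef {ι : Type*} [Fintype ι] [DecidableEq ι] {d : ℕ}
    (A : ι → Matrix (Fin d) (Fin d) ℝ) (c : ι → ℝ) (hc : ∀ j, 0 ≤ c j)
    (hA : ∀ j, (A j).PosSemidef) (hAc : ∀ j, (A j - c j • 1).PosSemidef) :
    ((Matrix.of fun u v : ι → Fin d => ∏ j, A j (u j) (v j))
      - (∏ j, c j) • 1).PosSemidef := by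
  suffices H : ∀ S : Finset ι,
      ((Matrix.of fun u v : ι → Fin d => ∏ j, (if j ∈ S then A j else 1) (u j) (v j))
        - (∏ j ∈ S, c j) • 1).PosSemidef by
    simpa using H Finset.univ
  intro S
  induction S using Finset.induction_on with
  | empty =>
    have h1 : (Matrix.of fun u v : ι → Fin d =>
        ∏ j, (if j ∈ (∅ : Finset ι) then A j else 1) (u j) (v j)) = 1 := by
      ext u v
      simp only [Matrix.of_apply, Finset.notMem_empty, if_false]
      by_cases huv : u = v
      · subst huv; simp [Matrix.one_apply]
      · obtain ⟨j0, hj0⟩ := Function.ne_iff.mp huv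
        rw [Matrix.one_apply_ne huv, Finset.prod_eq_zero (Finset.mem_univ j0)
          (show (1 : Matrix (Fin d) (Fin d) ℝ) (u j0) (v j0) = 0 from Matrix.one_apply_ne hj0)]
    rw [h1]
    simp only [Finset.prod_empty, one_smul, sub_self]
    exact Matrix.PosSemidef.zero
  | @insert t S hts IH =>
    set R : (ι → Fin d) → (ι → Fin d) → ℝ :=
      fun u v => ∏ j ∈ Finset.univ.erase t, (if j ∈ S then A j else 1) (u j) (v j) with hR
    have key : ∀ (B : Matrix (Fin d) (Fin d) ℝ) (u v : ι → Fin d),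
        (∏ j, (if j = t then B else if j ∈ S then A j else 1) (u j) (v j))
          = B (u t) (v t) * R u v := by
      intro B u v
      rw [← Finset.mul_prod_erase Finset.univ
        (fun j => (if j = t then B else if j ∈ S then A j else 1) (u j) (v j))
        (Finset.mem_univ t)]
      rw [if_pos rfl]
      congr 1
      refine Finset.prod_congr rfl fun j hj => ?_
      rw [if_neg (Finset.ne_of_mem_erase hj)]
    have hins : ∀ u v : ι → Fin d,
        (∏ j, (if j ∈ insert t S then A j else 1) (u j) (v j)) = A t (u t) (v t) * R u v := by
      intro u v
      rw [← key (A t) u v]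
      refine Finset.prod_congr rfl fun j _ => ?_
      by_cases hjt : j = t
      · subst hjt; simp
      · simp [hjt, Finset.mem_insert]
    have hSp : ∀ u v : ι → Fin d,
        (∏ j, (if j ∈ S then A j else 1) (u j) (v j))
          = (1 : Matrix (Fin d) (Fin d) ℝ) (u t) (v t) * R u v := by
      intro u v
      rw [← key 1 u v]
      refine Finset.prod_congr rfl fun j _ => ?_
      by_cases hjt : j = t
      · subst hjt; simp [hts]
      · simp [hjt]
    have hE : (Matrix.of fun u v : ι → Fin d =>
        (A t - c t • 1) (u t) (v t) * R u v).PosSemidef := by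
      have hEeq : (Matrix.of fun u v : ι → Fin d => (A t - c t • 1) (u t) (v t) * R u v)
          = Matrix.of fun u v : ι → Fin d =>
            ∏ j, (if j = t then A t - c t • 1 else if j ∈ S then A j else 1) (u j) (v j) := by
        ext u v
        simp only [Matrix.of_apply]
        rw [key]
      rw [hEeq]
      refine prodMatrix_posSemidef _ fun j => ?_
      by_cases hjt : j = t
      · rw [if_pos hjt]; exact hAc t
      · rw [if_neg hjt]
        by_cases hjS : j ∈ S
        · rw [if_pos hjS]; exact hA j
        · rw [if_neg hjS]; exact Matrix.PosSemidef.one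
    have hgoal : (Matrix.of fun u v : ι → Fin d =>
          ∏ j, (if j ∈ insert t S then A j else 1) (u j) (v j))
        - (∏ j ∈ insert t S, c j) • 1
        = (Matrix.of fun u v : ι → Fin d => (A t - c t • 1) (u t) (v t) * R u v)
          + c t • ((Matrix.of fun u v : ι → Fin d =>
              ∏ j, (if j ∈ S then A j else 1) (u j) (v j)) - (∏ j ∈ S, c j) • 1) := by
      ext u v
      simp only [Matrix.sub_apply, Matrix.add_apply, Matrix.smul_apply, Matrix.of_apply,
        smul_eq_mul, Finset.prod_insert hts, hins, hSp]
      ring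
    rw [hgoal]
    exact hE.add (posSemidef_smul_nonneg IH (hc t))


lemma sub_inf_smul_posSemidef {n : Type*} [Fintype n] [DecidableEq n] [Nonempty n]
    {A : Matrix n n ℝ} (hA : A.IsHermitian) :
    (A - (⨅ m, hA.eigenvalues m) • 1).PosSemidef := by
  set c := ⨅ m, hA.eigenvalues m with hc
  have hcle : ∀ m, c ≤ hA.eigenvalues m := fun m =>
    ciInf_le (Set.Finite.bddBelow (Set.finite_range _)) m
  have hV := hA.spectral_theorem
  rw [Unitary.conjStarAlgAut_apply] at hV
  set V : Matrix n n ℝ := (hA.eigenvectorUnitary : Matrix n n ℝ) with hVdef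
  have hU : V * star V = 1 := (Matrix.mem_unitaryGroup_iff).mp hA.eigenvectorUnitary.2
  have heq : A - c • 1
      = V * (Matrix.diagonal fun m => hA.eigenvalues m - c) * star V := by
    have hd : (Matrix.diagonal fun m => hA.eigenvalues m - c)
        = Matrix.diagonal (RCLike.ofReal ∘ hA.eigenvalues) - c • 1 := by
      rw [Matrix.smul_one_eq_diagonal, Matrix.diagonal_sub]
      rfl
    rw [hd, Matrix.mul_sub, Matrix.sub_mul, ← hV]
    congr 1
    rw [Matrix.mul_smul, Matrix.smul_mul, mul_one, hU]
  rw [heq]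
  have hpsd := (Matrix.posSemidef_diagonal_iff.mpr fun m =>
    sub_nonneg.mpr (hcle m)).mul_mul_conjTranspose_same V
  rw [← Matrix.star_eq_conjTranspose] at hpsd
  exact hpsd

lemma eigenvalues_ge_of_sub_posSemidef {n : Type*} [Fintype n] [DecidableEq n]
    {A : Matrix n n ℝ} (hA : A.IsHermitian) {c : ℝ}
    (h : (A - c • 1).PosSemidef) (s : n) : c ≤ hA.eigenvalues s := by
  set v : n → ℝ := ⇑(hA.eigenvectorBasis s) with hv
  have h2 := h.dotProduct_mulVec_nonneg v
  have hAv : A.mulVec v = hA.eigenvalues s • v := hA.mulVec_eigenvectorBasis s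
  have hvv : dotProduct v v = 1 := by
    have hnorm := hA.eigenvectorBasis.orthonormal.1 s
    have hinner : (inner ℝ (hA.eigenvectorBasis s) (hA.eigenvectorBasis s) : ℝ) = 1 := by
      rw [real_inner_self_eq_norm_sq, hnorm]; norm_num
    rw [← hinner, PiLp.inner_apply]
    simp [dotProduct, v, sq]
  rw [Matrix.sub_mulVec, dotProduct_sub, hAv, Matrix.smul_mulVec,
    Matrix.one_mulVec, dotProduct_smul, dotProduct_smul,
    star_trivial, smul_eq_mul, smul_eq_mul, hvv] at h2
  linarith

lemma gram_factor {ι : Type*} [Fintype ι] [DecidableEq ι] (i : ι) (d : ℕ)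
    (a b : ι → ℝ) (hab : ∀ j, a j < b j) (ks kt : ι → ℕ)
    (h1s : ∀ j, 1 ≤ ks j) (hds : ∀ j, ks j ≤ d)
    (h1t : ∀ j, 1 ≤ kt j) (hdt : ∀ j, kt j ≤ d)
    (A : ι → Matrix (Fin d) (Fin d) ℝ)
    (hAi : ∀ m n : Fin d, A i m n =
      ((m : ℕ) + 1) * ((n : ℕ) + 1) * ∫ x, x ^ ((m : ℕ) + (n : ℕ)) ∂(unif (a i) (b i)))
    (hAj : ∀ j, j ≠ i → ∀ m n : Fin d, A j m n =
      ∫ x, (x ^ ((m : ℕ) + 1) - ∫ y, y ^ ((m : ℕ) + 1) ∂(unif (a j) (b j))) *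
           (x ^ ((n : ℕ) + 1) - ∫ y, y ^ ((n : ℕ) + 1) ∂(unif (a j) (b j)))
        ∂(unif (a j) (b j))) :
    ∫ x, hfun i a b ks x * hfun i a b kt x ∂(Measure.pi fun j => unif (a j) (b j))
      = ∏ j, A j ⟨ks j - 1, by have := h1s j; have := hds j; omega⟩
              ⟨kt j - 1, by have := h1t j; have := hdt j; omega⟩ := by
  set μ : ι → ℕ → ℝ := fun j e => ∫ y, y ^ e ∂(unif (a j) (b j)) with hμ
  set F : ι → ℝ → ℝ := fun j y =>
    if j = i then ((ks i : ℝ) * y ^ (ks i - 1)) * ((kt i : ℝ) * y ^ (kt i - 1))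
    else (y ^ ks j - μ j (ks j)) * (y ^ kt j - μ j (kt j)) with hF
  have hpt : ∀ x : ι → ℝ, hfun i a b ks x * hfun i a b kt x = ∏ j, F j (x j) := by
    intro x
    rw [← Finset.mul_prod_erase Finset.univ (fun j => F j (x j)) (Finset.mem_univ i)]
    have h1 : F i (x i) = ((ks i : ℝ) * x i ^ (ks i - 1)) * ((kt i : ℝ) * x i ^ (kt i - 1)) := by
      rw [hF]; simp
    have h2 : ∀ j ∈ Finset.univ.erase i,
        F j (x j) = (x j ^ ks j - μ j (ks j)) * (x j ^ kt j - μ j (kt j)) := by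
      intro j hj
      rw [hF]
      simp [Finset.ne_of_mem_erase hj]
    rw [h1, Finset.prod_congr rfl h2, hfun, hfun, Finset.prod_mul_distrib]
    ring
  simp_rw [hpt]
  have key : (∫ x : ι → ℝ, ∏ j, F j (x j) ∂(Measure.pi fun j => unif (a j) (b j)))
      = ∏ j, ∫ y, F j y ∂(unif (a j) (b j)) := by
    haveI : ∀ j, IsProbabilityMeasure (unif (a j) (b j)) := fun j => unif_isProb (hab j)
    exact MeasureTheory.integral_fintype_prod_eq_prod (fun j y => F j y)
  have key' : (∫ x : ι → ℝ, ∏ j, F j (x j) ∂(Measure.pi fun j => unif (a j) (b j)))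
      = ∏ j, ∫ y, F j y ∂(unif (a j) (b j)) := key
  rw [key']
  refine Finset.prod_congr rfl fun j _ => ?_
  by_cases hji : j = i
  · subst hji
    rw [hAi]
    have hpow : ∀ y : ℝ, F j y = ((ks j : ℝ) * (kt j : ℝ)) * y ^ ((ks j - 1) + (kt j - 1)) := by
      intro y
      simp only [hF]
      simp only [if_true, pow_add]
      ring
    simp_rw [hpow]
    rw [MeasureTheory.integral_const_mul]
    have c1 : ((ks j - 1 : ℕ) : ℝ) + 1 = (ks j : ℝ) := by
      rw [Nat.cast_sub (h1s j)]; push_cast; ring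
    have c2 : ((kt j - 1 : ℕ) : ℝ) + 1 = (kt j : ℝ) := by
      rw [Nat.cast_sub (h1t j)]; push_cast; ring
    show ((ks j : ℝ) * (kt j : ℝ)) * _ = (((ks j - 1 : ℕ) : ℝ) + 1) * (((kt j - 1 : ℕ) : ℝ) + 1) * _
    rw [c1, c2]
  · rw [hAj j hji]
    have e1 : (ks j - 1) + 1 = ks j := Nat.sub_add_cancel (h1s j)
    have e2 : (kt j - 1) + 1 = kt j := Nat.sub_add_cancel (h1t j)
    simp only [e1, e2]
    refine integral_congr_ae (Filter.Eventually.of_forall fun y => ?_)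
    rw [hF]
    simp [hji, hμ]

/-- The Gram matrix `M` of the mostly centered basis functions `(h_k)_{k ∈ K}` with respect to
a product of uniform distributions satisfies `λ_min(M) ≥ ∏_j λ_min(A^j) > 0`, where `A^i` is
the scaled Hankel moment matrix `A^i_{m,n} = m·n·E[X^{m+n-2}]` of the `i`-th marginal and, for
`j ≠ i`, `A^j` is the covariance matrix of `(X, …, X^d)` of the `j`-th marginal. -/
theorem lambdaMin_gram_centeredBasis_ge {ι : Type*} [Fintype ι] [DecidableEq ι] (i : ι)
    (d : ℕ) (hd : 1 ≤ d) (a b : ι → ℝ) (hab : ∀ j, a j < b j)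
    (κ : Type*) [Fintype κ] [Nonempty κ] [DecidableEq κ]
    (k : κ → ι → ℕ) (hkinj : Function.Injective k)
    (hk1 : ∀ s j, 1 ≤ k s j) (hkd : ∀ s j, k s j ≤ d)
    (A : ι → Matrix (Fin d) (Fin d) ℝ)
    (hAi : ∀ m n : Fin d, A i m n =
      ((m : ℕ) + 1) * ((n : ℕ) + 1) * ∫ x, x ^ ((m : ℕ) + (n : ℕ)) ∂(unif (a i) (b i)))
    (hAj : ∀ j, j ≠ i → ∀ m n : Fin d, A j m n =
      ∫ x, (x ^ ((m : ℕ) + 1) - ∫ y, y ^ ((m : ℕ) + 1) ∂(unif (a j) (b j))) *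
           (x ^ ((n : ℕ) + 1) - ∫ y, y ^ ((n : ℕ) + 1) ∂(unif (a j) (b j)))
        ∂(unif (a j) (b j)))
    (M : Matrix κ κ ℝ)
    (hM : ∀ s t, M s t =
      ∫ x, hfun i a b (k s) x * hfun i a b (k t) x
        ∂(Measure.pi fun j => unif (a j) (b j)))
    (hMh : M.IsHermitian) (hAh : ∀ j, (A j).IsHermitian) :
    (∏ j, ⨅ m, (hAh j).eigenvalues m) ≤ (⨅ s, hMh.eigenvalues s) ∧
      0 < ∏ j, ⨅ m, (hAh j).eigenvalues m := by
  haveI : Nonempty (Fin d) := Fin.pos_iff_nonempty.mp hd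
  have hPD : ∀ j, (A j).PosDef := by
    intro j
    by_cases hji : j = i
    · subst hji; exact hankel_posDef (hab j) _ hAi
    · exact cov_posDef (hab j) _ (hAj j hji)
  have hcpos : ∀ j, 0 < ⨅ m, (hAh j).eigenvalues m := by
    intro j
    obtain ⟨m, hm⟩ := exists_eq_ciInf_of_finite (f := (hAh j).eigenvalues)
    rw [← hm]
    exact (hPD j).eigenvalues_pos m
  refine ⟨?_, Finset.prod_pos fun j _ => hcpos j⟩
  set c : ι → ℝ := fun j => ⨅ m, (hAh j).eigenvalues m with hcdef
  set e : κ → (ι → Fin d) := fun s j =>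
    ⟨k s j - 1, by have h1 := hk1 s j; have h2 := hkd s j; omega⟩ with he
  have hMfact : ∀ s t, M s t = ∏ j, A j (e s j) (e t j) := by
    intro s t
    rw [hM s t, gram_factor i d a b hab (k s) (k t) (fun j => hk1 s j) (fun j => hkd s j)
      (fun j => hk1 t j) (fun j => hkd t j) A hAi hAj]
  have heinj : Function.Injective e := by
    intro s t hst
    apply hkinj
    funext j
    have hj := congrArg (fun u => ((u j : Fin d) : ℕ)) hst
    simp only [he] at hj
    have h1 := hk1 s j
    have h2 := hk1 t j
    omega
  have hB := prodMatrix_sub_smul_one_posSemidef A c (fun j => (hcpos j).le)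
    (fun j => (hPD j).posSemidef) (fun j => sub_inf_smul_posSemidef (hAh j))
  have hMc : (M - (∏ j, c j) • 1).PosSemidef := by
    have hEq : ((Matrix.of fun u v : ι → Fin d => ∏ j, A j (u j) (v j))
        - (∏ j, c j) • 1).submatrix e e = M - (∏ j, c j) • 1 := by
      ext s t
      simp only [Matrix.submatrix_apply, Matrix.sub_apply, Matrix.smul_apply, Matrix.of_apply,
        Matrix.one_apply, heinj.eq_iff, hMfact, smul_eq_mul]
    rw [← hEq]
    exact hB.submatrix e
  exact le_ciInf fun s => eigenvalues_ge_of_sub_posSemidef hMh hMc s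
end

section
/- Let c be a finite set with distinguished element i ∈ c, and let μ = ⊗_{j∈c} μ_j be a product probability measure on ℝ^c. Let H = Σ_{s∈S} H_s be a finite sum where each H_s(x) = a_s(x_i) · ∏_{j∈c∖{i}} (u_{s,j}(x_j) − E_{μ_j}[u_{s,j}]) with a_s and each u_{s,j} bounded measurable. Let G = Σ_{t∈T} G_t be a finite sum of bounded measurable functions where each G_t does not depend on the coordinate j_t for some j_t ∈ c∖{i}. Then ∫ (H + G)² dμ ≥ ∫ H² dμ; that is, adding terms that each miss some coordinate of c∖{i} cannot decrease the second moment of the fully centered part. -/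
open MeasureTheory

private lemma integrable_of_bdd'' {α : Type*} [MeasurableSpace α] {ν : Measure α}
    [IsFiniteMeasure ν] {f : α → ℝ} (hm : Measurable f) {C : ℝ} (hb : ∀ x, |f x| ≤ C) :
    Integrable f ν :=
  (integrable_const C).mono' hm.aestronglyMeasurable
    (Filter.Eventually.of_forall fun x => by simpa [Real.norm_eq_abs] using hb x)

private lemma key_zero {ι : Type*} [Fintype ι] [DecidableEq ι]
    (μ : ι → Measure ℝ) [∀ j, IsProbabilityMeasure (μ j)] (j₀ : ι)
    (φ : ℝ → ℝ) (hφm : Measurable φ) (Cφ : ℝ) (hφb : ∀ y, |φ y| ≤ Cφ)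
    (hφ0 : ∫ y, φ y ∂(μ j₀) = 0)
    (F : (ι → ℝ) → ℝ) (hFm : Measurable F) (CF : ℝ) (hFb : ∀ x, |F x| ≤ CF)
    (hFind : ∀ x y : ι → ℝ, (∀ j, j ≠ j₀ → x j = y j) → F x = F y) :
    ∫ x, φ (x j₀) * F x ∂(Measure.pi μ) = 0 := by
  classical
  set e := MeasurableEquiv.piEquivPiSubtypeProd (fun _ : ι => ℝ) (fun j => j = j₀) with he
  have hmp := measurePreserving_piEquivPiSubtypeProd μ (fun j => j = j₀)
  rw [Subsingleton.elim (Subtype.fintype fun j => j = j₀) (Fintype.subtypeEq j₀)] at hmp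
  set g : ((∀ _ : Subtype (fun j => j = j₀), ℝ) × (∀ _ : Subtype (fun j => ¬ j = j₀), ℝ)) → ℝ :=
    fun z => φ (z.1 ⟨j₀, rfl⟩) * F (e.symm z) with hg
  have hgid : ∀ x : ι → ℝ, g (e x) = φ (x j₀) * F x := by
    intro x
    simp only [hg, MeasurableEquiv.symm_apply_apply]
    rfl
  have step1 : ∫ x, φ (x j₀) * F x ∂(Measure.pi μ)
      = ∫ z, g z ∂((Measure.pi fun i : Subtype (fun j => j = j₀) => μ i).prod
          (Measure.pi fun i : Subtype (fun j => ¬ j = j₀) => μ i)) := by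
    refine (integral_congr_ae (Filter.Eventually.of_forall fun x => (hgid x).symm)).trans ?_
    exact hmp.integral_comp' g
  have hgm : Measurable g :=
    (hφm.comp ((measurable_pi_apply _).comp measurable_fst)).mul (hFm.comp e.symm.measurable)
  have hCφ0 : 0 ≤ Cφ := le_trans (abs_nonneg _) (hφb 0)
  have hgb : ∀ z, |g z| ≤ Cφ * CF := by
    intro z
    rw [hg, abs_mul]
    exact mul_le_mul (hφb _) (hFb _) (abs_nonneg _) hCφ0
  have hgint : Integrable g ((Measure.pi fun i : Subtype (fun j => j = j₀) => μ i).prod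
      (Measure.pi fun i : Subtype (fun j => ¬ j = j₀) => μ i)) := integrable_of_bdd'' hgm hgb
  rw [step1, integral_prod g hgint]
  have hFconst : ∀ (x : ∀ _ : Subtype (fun j => j = j₀), ℝ) y,
      F (e.symm (x, y)) = F (e.symm (fun _ => (0:ℝ), y)) := by
    intro x y
    apply hFind
    intro j hj
    simp only [he, MeasurableEquiv.piEquivPiSubtypeProd_symm_apply, dif_neg hj]
  have hzero : ∫ x : (∀ _ : Subtype (fun j => j = j₀), ℝ),
      φ (x ⟨j₀, rfl⟩) ∂(Measure.pi fun i : Subtype (fun j => j = j₀) => μ i) = 0 := by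
    have hmp2 := measurePreserving_piUnique (fun i : Subtype (fun j => j = j₀) => μ i)
    have h1 : ∫ x : (∀ _ : Subtype (fun j => j = j₀), ℝ),
        φ (x ⟨j₀, rfl⟩) ∂(Measure.pi fun i : Subtype (fun j => j = j₀) => μ i)
        = ∫ r : ℝ, φ r ∂(μ ((default : Subtype (fun j => j = j₀)) : ι)) := by
      rw [← hmp2.integral_comp' (fun r => φ r)]
      refine integral_congr_ae (Filter.Eventually.of_forall fun x => ?_)
      simp only [MeasurableEquiv.piUnique_apply]
      exact congrArg φ (congrArg x (Subsingleton.elim _ _))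
    rw [h1, show ((default : Subtype (fun j => j = j₀)) : ι) = j₀ from
      (default : Subtype (fun j => j = j₀)).2, hφ0]
  calc ∫ x, ∫ y, g (x, y) ∂_ ∂(Measure.pi fun i : Subtype (fun j => j = j₀) => μ i)
      = ∫ x : (∀ _ : Subtype (fun j => j = j₀), ℝ), φ (x ⟨j₀, rfl⟩) *
          ∫ y, F (e.symm (fun _ => (0:ℝ), y))
            ∂(Measure.pi fun i : Subtype (fun j => ¬ j = j₀) => μ i)
          ∂(Measure.pi fun i : Subtype (fun j => j = j₀) => μ i) := by
        refine integral_congr_ae (Filter.Eventually.of_forall fun x => ?_)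
        dsimp only
        rw [← integral_const_mul]
        exact integral_congr_ae (Filter.Eventually.of_forall fun y => by
          rw [hg]; simp only; rw [hFconst x y])
    _ = (∫ x : (∀ _ : Subtype (fun j => j = j₀), ℝ),
          φ (x ⟨j₀, rfl⟩) ∂(Measure.pi fun i : Subtype (fun j => j = j₀) => μ i)) *
          ∫ y, F (e.symm (fun _ => (0:ℝ), y))
            ∂(Measure.pi fun i : Subtype (fun j => ¬ j = j₀) => μ i) :=
        integral_mul_const _ _
    _ = 0 := by rw [hzero, zero_mul]

/-- Adding terms that each miss some coordinate of `c ∖ {i}` cannot decrease the second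
moment of the fully centered part: if `H = Σ_s a_s(x_i)·∏_{j≠i}(u_{s,j}(x_j) − E[u_{s,j}])`
and `G = Σ_t G_t` with each `G_t` bounded measurable and not depending on some coordinate
`j_t ∈ c ∖ {i}`, then `∫ (H + G)² dμ ≥ ∫ H² dμ` for the product measure `μ`. -/
theorem integral_sq_add_indep_terms_ge {ι : Type*} [Fintype ι] [DecidableEq ι] (i : ι)
    (μ : ι → Measure ℝ) [∀ j, IsProbabilityMeasure (μ j)]
    {S T : Type*} [Fintype S] [Fintype T]
    (a : S → ℝ → ℝ) (ham : ∀ s, Measurable (a s)) (hab : ∀ s, ∃ C : ℝ, ∀ t, |a s t| ≤ C)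
    (u : S → ι → ℝ → ℝ) (hum : ∀ s j, Measurable (u s j))
    (hub : ∀ s j, ∃ C : ℝ, ∀ t, |u s j t| ≤ C)
    (G : T → (ι → ℝ) → ℝ) (hGm : ∀ t, Measurable (G t))
    (hGb : ∀ t, ∃ C : ℝ, ∀ x, |G t x| ≤ C)
    (jt : T → ι) (hjt : ∀ t, jt t ≠ i)
    (hGind : ∀ t, ∀ x y : ι → ℝ, (∀ j, j ≠ jt t → x j = y j) → G t x = G t y)
    (H : (ι → ℝ) → ℝ)
    (hH : ∀ x, H x = ∑ s, a s (x i) *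
      ∏ j ∈ Finset.univ.erase i, (u s j (x j) - ∫ y, u s j y ∂(μ j))) :
    ∫ x, (H x) ^ 2 ∂(Measure.pi μ) ≤
      ∫ x, (H x + ∑ t, G t x) ^ 2 ∂(Measure.pi μ) := by
  classical
  choose Ca hCa using hab
  choose Cu hCu using hub
  choose CG hCG using hGb
  have hCa0 : ∀ s, 0 ≤ Ca s := fun s => le_trans (abs_nonneg _) (hCa s 0)
  have hCG0 : ∀ t, 0 ≤ CG t := fun t => le_trans (abs_nonneg _) (hCG t 0)
  set π := Measure.pi μ with hπ
  set cst : S → ι → ℝ := fun s j => ∫ y, u s j y ∂(μ j) with hcst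
  set v : S → ι → ℝ → ℝ := fun s j y => u s j y - cst s j with hv
  have hvm : ∀ s j, Measurable (v s j) := fun s j => (hum s j).sub measurable_const
  set D : S → ι → ℝ := fun s j => Cu s j + |cst s j| with hD
  have hvb : ∀ s j y, |v s j y| ≤ D s j := fun s j y =>
    (abs_sub _ _).trans (add_le_add (hCu s j y) le_rfl)
  have hD0 : ∀ s j, 0 ≤ D s j := fun s j =>
    le_trans (abs_nonneg _) (hvb s j 0)
  have hv0 : ∀ s j, ∫ y, v s j y ∂(μ j) = 0 := by
    intro s j
    rw [hv]
    simp only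
    rw [integral_sub (integrable_of_bdd'' (hum s j) (hCu s j)) (integrable_const _),
      integral_const]
    simp [hcst]
  have hHfun : H = fun x => ∑ s, a s (x i) * ∏ j ∈ Finset.univ.erase i, v s j (x j) := by
    funext x
    rw [hH x]
  have hHm : Measurable H := by
    rw [hHfun]
    exact Finset.measurable_sum _ fun s _ => ((ham s).comp (measurable_pi_apply i)).mul
      (Finset.measurable_prod _ fun j _ => (hvm s j).comp (measurable_pi_apply j))
  set BH : ℝ := ∑ s, Ca s * ∏ j ∈ Finset.univ.erase i, D s j with hBH
  have hHb : ∀ x, |H x| ≤ BH := by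
    intro x
    rw [hHfun]
    refine le_trans (Finset.abs_sum_le_sum_abs _ _) (Finset.sum_le_sum fun s _ => ?_)
    rw [abs_mul, Finset.abs_prod]
    exact mul_le_mul (hCa s _)
      (Finset.prod_le_prod (fun j _ => abs_nonneg _) (fun j _ => hvb s j _))
      (Finset.prod_nonneg fun j _ => abs_nonneg _) (hCa0 s)
  have hKm : Measurable (fun x : ι → ℝ => ∑ t, G t x) :=
    Finset.measurable_sum _ fun t _ => hGm t
  set BK : ℝ := ∑ t, CG t with hBK
  have hKb : ∀ x, |∑ t, G t x| ≤ BK :=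
    fun x => le_trans (Finset.abs_sum_le_sum_abs _ _) (Finset.sum_le_sum fun t _ => hCG t x)
  -- integrabilities
  have i1 : Integrable (fun x => H x ^ 2) π :=
    integrable_of_bdd'' (hHm.pow_const 2) (C := BH ^ 2) (fun x => by
      rw [abs_pow]; exact pow_le_pow_left₀ (abs_nonneg _) (hHb x) 2)
  have i2 : Integrable (fun x => H x * ∑ t, G t x) π :=
    integrable_of_bdd'' (hHm.mul hKm) (C := BH * BK) (fun x => by
      rw [abs_mul]
      exact mul_le_mul (hHb x) (hKb x) (abs_nonneg _) (le_trans (abs_nonneg _) (hHb x)))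
  have i3 : Integrable (fun x => (∑ t, G t x) * (∑ t, G t x)) π :=
    integrable_of_bdd'' (hKm.mul hKm) (C := BK * BK) (fun x => by
      rw [abs_mul]
      exact mul_le_mul (hKb x) (hKb x) (abs_nonneg _) (le_trans (abs_nonneg _) (hKb x)))
  -- the cross term vanishes
  have hcross : ∫ x, H x * ∑ t, G t x ∂π = 0 := by
    have h1 : (fun x => H x * ∑ t, G t x) = fun x => ∑ t, H x * G t x :=
      funext fun x => Finset.mul_sum _ _ _
    have hterm : ∀ t, ∫ x, H x * G t x ∂π = 0 := by
      intro t
      have h2 : (fun x => H x * G t x) = fun x =>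
          ∑ s, (a s (x i) * ∏ j ∈ Finset.univ.erase i, v s j (x j)) * G t x := by
        funext x
        rw [hHfun]
        simp only
        rw [Finset.sum_mul]
      have hj₀ : jt t ∈ Finset.univ.erase i := Finset.mem_erase.2 ⟨hjt t, Finset.mem_univ _⟩
      have hsterm : ∀ s : S, ∫ x,
          (a s (x i) * ∏ j ∈ Finset.univ.erase i, v s j (x j)) * G t x ∂π = 0 := by
        intro s
        have hsplit : (fun x => (a s (x i) * ∏ j ∈ Finset.univ.erase i, v s j (x j)) * G t x)
            = fun x => v s (jt t) (x (jt t)) *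
              ((a s (x i) * ∏ j ∈ (Finset.univ.erase i).erase (jt t), v s j (x j)) * G t x) := by
          funext x
          rw [← Finset.mul_prod_erase _ _ hj₀]
          ring
        rw [hsplit]
        refine key_zero μ (jt t) (v s (jt t)) (hvm s (jt t)) (D s (jt t)) (fun y => hvb s _ y)
          (hv0 s (jt t))
          (fun x => (a s (x i) * ∏ j ∈ (Finset.univ.erase i).erase (jt t), v s j (x j)) * G t x)
          ?_ ((Ca s * ∏ j ∈ (Finset.univ.erase i).erase (jt t), D s j) * CG t) ?_ ?_
        · exact (((ham s).comp (measurable_pi_apply i)).mul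
            (Finset.measurable_prod _ fun j _ => (hvm s j).comp (measurable_pi_apply j))).mul
            (hGm t)
        · intro x
          rw [abs_mul, abs_mul, Finset.abs_prod]
          have hp : |a s (x i)| * ∏ j ∈ (Finset.univ.erase i).erase (jt t), |v s j (x j)|
              ≤ Ca s * ∏ j ∈ (Finset.univ.erase i).erase (jt t), D s j :=
            mul_le_mul (hCa s _)
              (Finset.prod_le_prod (fun j _ => abs_nonneg _) (fun j _ => hvb s j _))
              (Finset.prod_nonneg fun j _ => abs_nonneg _) (hCa0 s)
          exact mul_le_mul hp (hCG t x) (abs_nonneg _)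
            (le_trans (mul_nonneg (abs_nonneg _)
              (Finset.prod_nonneg fun j _ => abs_nonneg _)) hp)
        · intro x y hxy
          have h3 : a s (x i) = a s (y i) := by rw [hxy i (Ne.symm (hjt t))]
          have h4 : ∀ j ∈ (Finset.univ.erase i).erase (jt t), v s j (x j) = v s j (y j) :=
            fun j hj => by rw [hxy j (Finset.mem_erase.1 hj).1]
          rw [h3, Finset.prod_congr rfl h4, hGind t x y hxy]
      rw [h2, integral_finset_sum]
      · exact Finset.sum_eq_zero fun s _ => hsterm s
      · intro s _
        refine integrable_of_bdd''
          (((ham s).comp (measurable_pi_apply i)).mul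
            (Finset.measurable_prod _ fun j _ => (hvm s j).comp (measurable_pi_apply j))|>.mul
            (hGm t))
          (C := Ca s * (∏ j ∈ Finset.univ.erase i, D s j) * CG t) (fun x => ?_)
        rw [abs_mul, abs_mul, Finset.abs_prod]
        have hp : |a s (x i)| * ∏ j ∈ Finset.univ.erase i, |v s j (x j)|
            ≤ Ca s * ∏ j ∈ Finset.univ.erase i, D s j :=
          mul_le_mul (hCa s _)
            (Finset.prod_le_prod (fun j _ => abs_nonneg _) (fun j _ => hvb s j _))
            (Finset.prod_nonneg fun j _ => abs_nonneg _) (hCa0 s)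
        exact mul_le_mul hp (hCG t x) (abs_nonneg _)
          (le_trans (mul_nonneg (abs_nonneg _) (Finset.prod_nonneg fun j _ => abs_nonneg _)) hp)
    rw [h1, integral_finset_sum]
    · exact Finset.sum_eq_zero fun t _ => hterm t
    · intro t _
      refine integrable_of_bdd'' (hHm.mul (hGm t)) (C := BH * CG t) (fun x => ?_)
      rw [abs_mul]
      exact mul_le_mul (hHb x) (hCG t x) (abs_nonneg _) (le_trans (abs_nonneg _) (hHb x))
  -- final computation
  have hexp : (fun x => (H x + ∑ t, G t x) ^ 2)
      = fun x => H x ^ 2 + (2 * (H x * ∑ t, G t x) + (∑ t, G t x) * (∑ t, G t x)) :=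
    funext fun x => by ring
  have i2' : Integrable (fun x => 2 * (H x * ∑ t, G t x)) π := by exact i2.const_mul 2
  have i23 : Integrable (fun x => 2 * (H x * ∑ t, G t x) + (∑ t, G t x) * (∑ t, G t x)) π := by
    exact i2'.add i3
  rw [hexp, integral_add i1 i23, integral_add i2' i3, integral_const_mul, hcross, mul_zero,
    zero_add]
  have hQ : 0 ≤ ∫ x, (∑ t, G t x) * (∑ t, G t x) ∂π :=
    integral_nonneg fun x => mul_self_nonneg _
  linarith
end
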